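/- arXiv:1810.09020 — 2 statements merged into one kernel-verified Lean document; each statement's English description precedes it below -/
import Mathlib

section
/- Let γ be a parabolic isometry of ℍⁿ fixing the ideal point ∞ and γ̄ a hyperbolic isometry fixing ∞ and another ideal point. If b ≠ 0 (γ is not the identity on the horosphere through (0,1) up to rotation about 0), then the subgroup ⟨γ, γ̄⟩ of Isom⁺(ℍⁿ) is not discrete. -/
open Matrix Filter Topology

private lemma aux_not_discrete (m : ℕ)
    (A B : Matrix (Fin m) (Fin m) ℝ)
    (hB : B ∈ Matrix.specialOrthogonalGroup (Fin m) ℝ)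
    (b : Fin m → ℝ) (hb : b ≠ 0)
    (lam : ℝ) (hlam : 0 < lam) (hlt : lam < 1)
    (γ γbar : Equiv.Perm ((Fin m → ℝ) × ℝ))
    (hγ : ∀ p, γ p = (A *ᵥ p.1 + b, p.2))
    (hγbar : ∀ p, γbar p = (lam • (B *ᵥ p.1), lam * p.2)) :
    ∃ p c : (Fin m → ℝ) × ℝ, 0 < p.2 ∧ 0 < c.2 ∧
      AccPt c (𝓟 ((fun g : Equiv.Perm ((Fin m → ℝ) × ℝ) => g p) ''
        (Subgroup.closure {γ, γbar} : Subgroup (Equiv.Perm ((Fin m → ℝ) × ℝ))))) := by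
  set c : (Fin m → ℝ) × ℝ := (0, 1) with hc
  refine ⟨c, c, one_pos, one_pos, ?_⟩
  set S : Set ((Fin m → ℝ) × ℝ) :=
    ((fun g : Equiv.Perm ((Fin m → ℝ) × ℝ) => g c) ''
      (Subgroup.closure {γ, γbar} : Subgroup (Equiv.Perm ((Fin m → ℝ) × ℝ)))) with hS
  -- formula for powers of γbar
  have hpow : ∀ (n : ℕ) (p : (Fin m → ℝ) × ℝ),
      (γbar ^ n) p = (lam ^ n • (B ^ n *ᵥ p.1), lam ^ n * p.2) := by
    intro n
    induction n with
    | zero => intro p; simp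
    | succ n ih =>
      intro p
      rw [pow_succ' γbar n, Equiv.Perm.mul_apply, ih, hγbar]
      simp [Matrix.mulVec_smul, Matrix.mulVec_mulVec, smul_smul, pow_succ', mul_assoc]
  -- inverse of γbar ^ n at c
  have hinv : ∀ n : ℕ, (γbar ^ n)⁻¹ c = ((0 : Fin m → ℝ), (lam ^ n)⁻¹) := by
    intro n
    have h1 : (γbar ^ n) ((0 : Fin m → ℝ), (lam ^ n)⁻¹) = c := by
      rw [hpow]
      simp [hc, mul_inv_cancel₀ (pow_ne_zero n hlam.ne')]
    rw [← h1, Equiv.Perm.inv_def, Equiv.symm_apply_apply]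
  -- orthogonality of powers of B
  have horth : ∀ n : ℕ, (B ^ n)ᵀ * B ^ n = 1 ∧ B ^ n * (B ^ n)ᵀ = 1 := by
    intro n
    have h : B ^ n ∈ Matrix.specialOrthogonalGroup (Fin m) ℝ := pow_mem hB n
    have h1 := h.1.1
    have h2 := h.1.2
    constructor
    · simpa [Matrix.star_eq_conjTranspose] using h1
    · simpa [Matrix.star_eq_conjTranspose] using h2
  set w : ℕ → Fin m → ℝ := fun n => B ^ n *ᵥ b with hw
  have hw0 : ∀ n, w n ≠ 0 := by
    intro n h
    apply hb
    have h2 := congrArg (fun v => (B ^ n)ᵀ *ᵥ v) h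
    simp only [hw, Matrix.mulVec_mulVec, Matrix.mulVec_zero] at h2
    rw [(horth n).1, Matrix.one_mulVec] at h2
    exact h2
  -- entries of B^n are bounded by 1
  have hent : ∀ (n : ℕ) (i j : Fin m), |(B ^ n) i j| ≤ 1 := by
    intro n i j
    have h := congrFun (congrFun (horth n).2 i) i
    rw [Matrix.mul_apply] at h
    simp only [Matrix.transpose_apply, Matrix.one_apply_eq] at h
    have hle : (B ^ n) i j * (B ^ n) i j ≤ 1 := by
      rw [← h]
      exact Finset.single_le_sum (f := fun j => (B ^ n) i j * (B ^ n) i j)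
        (fun k _ => mul_self_nonneg _) (Finset.mem_univ j)
    exact abs_le_one_iff_mul_self_le_one.mpr hle
  set C : ℝ := ∑ j, |b j| with hC
  have hCnn : 0 ≤ C := Finset.sum_nonneg fun j _ => abs_nonneg _
  have hwb : ∀ n, ‖w n‖ ≤ C := by
    intro n
    refine pi_norm_le_iff_of_nonneg hCnn |>.mpr fun i => ?_
    have : w n i = ∑ j, (B ^ n) i j * b j := by
      simp [hw, Matrix.mulVec, dotProduct]
    rw [Real.norm_eq_abs, this]
    calc |∑ j, (B ^ n) i j * b j| ≤ ∑ j, |(B ^ n) i j * b j| := Finset.abs_sum_le_sum_abs _ _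
      _ ≤ ∑ j, |b j| := by
          refine Finset.sum_le_sum fun j _ => ?_
          rw [abs_mul]
          calc |(B ^ n) i j| * |b j| ≤ 1 * |b j| :=
                mul_le_mul_of_nonneg_right (hent n i j) (abs_nonneg _)
            _ = |b j| := one_mul _
  set q : ℕ → (Fin m → ℝ) × ℝ := fun n => (lam ^ n • w n, 1) with hq
  -- q n lies in the orbit
  have hmem : ∀ n, q n ∈ S := by
    intro n
    refine ⟨γbar ^ n * γ * (γbar ^ n)⁻¹, ?_, ?_⟩
    · have hγm : γ ∈ Subgroup.closure ({γ, γbar} : Set _) :=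
        Subgroup.subset_closure (Set.mem_insert _ _)
      have hγbm : γbar ∈ Subgroup.closure ({γ, γbar} : Set _) :=
        Subgroup.subset_closure (Set.mem_insert_of_mem _ rfl)
      exact mul_mem (mul_mem (pow_mem hγbm n) hγm) (inv_mem (pow_mem hγbm n))
    · show (γbar ^ n) (γ ((γbar ^ n)⁻¹ c)) = q n
      rw [hinv n, hγ]
      simp only [Matrix.mulVec_zero, zero_add]
      rw [hpow]
      simp [hq, hw, mul_inv_cancel₀ (pow_ne_zero n hlam.ne')]
  have hne : ∀ n, q n ≠ c := by
    intro n h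
    have : lam ^ n • w n = 0 := congrArg Prod.fst h
    exact smul_ne_zero (pow_ne_zero n hlam.ne') (hw0 n) this
  -- convergence of q to c
  have htend1 : Tendsto (fun n => lam ^ n • w n) atTop (𝓝 0) := by
    rw [tendsto_zero_iff_norm_tendsto_zero]
    have hb0 : Tendsto (fun n : ℕ => lam ^ n * C) atTop (𝓝 0) := by
      have := (tendsto_pow_atTop_nhds_zero_of_lt_one hlam.le hlt).mul_const C
      simpa using this
    refine squeeze_zero (fun n => norm_nonneg _) (fun n => ?_) hb0
    rw [norm_smul, Real.norm_eq_abs, abs_pow, abs_of_pos hlam]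
    exact mul_le_mul_of_nonneg_left (hwb n) (pow_nonneg hlam.le n)
  have htend : Tendsto q atTop (𝓝 c) := htend1.prodMk_nhds tendsto_const_nhds
  rw [accPt_iff_frequently]
  exact htend.frequently (Frequently.of_forall fun n => ⟨hne n, hmem n⟩)

/-- Let `γ` be a parabolic isometry of `ℍⁿ` fixing the ideal point `∞`, written in
the upper half-space model as `γ(x,t) = (Ax + b, t)` with `A ∈ SO(n-1)` and
`b ≠ 0`, and let `γ̄` be a hyperbolic isometry fixing `∞` and another ideal point,
written as `γ̄(x,t) = λ(Bx, t)` with `λ > 0`, `λ ≠ 1`, `B ∈ SO(n-1)`.  Then the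
subgroup `⟨γ, γ̄⟩` is not discrete: the orbit of some point of the upper half-space
has an accumulation point in the upper half-space. -/
theorem subgroup_not_discrete (m : ℕ)
    (A B : Matrix (Fin m) (Fin m) ℝ)
    (hA : A ∈ Matrix.specialOrthogonalGroup (Fin m) ℝ)
    (hB : B ∈ Matrix.specialOrthogonalGroup (Fin m) ℝ)
    (b : Fin m → ℝ) (hb : b ≠ 0)
    (lam : ℝ) (hlam : 0 < lam) (hlam' : lam ≠ 1)
    (γ γbar : Equiv.Perm ((Fin m → ℝ) × ℝ))
    (hγ : ∀ p, γ p = (A *ᵥ p.1 + b, p.2))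
    (hγbar : ∀ p, γbar p = (lam • (B *ᵥ p.1), lam * p.2)) :
    ∃ p c : (Fin m → ℝ) × ℝ, 0 < p.2 ∧ 0 < c.2 ∧
      AccPt c (𝓟 ((fun g : Equiv.Perm ((Fin m → ℝ) × ℝ) => g p) ''
        (Subgroup.closure {γ, γbar} : Subgroup (Equiv.Perm ((Fin m → ℝ) × ℝ))))) := by
  rcases hlam'.lt_or_gt with hlt | hgt
  · exact aux_not_discrete m A B hB b hb lam hlam hlt γ γbar hγ hγbar
  · -- use γbar⁻¹ instead; it scales by lam⁻¹ < 1 with matrix Bᵀ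
    have hBmem : B ∈ Matrix.unitaryGroup (Fin m) ℝ := hB.1
    have hBBt : B * Bᵀ = 1 := by
      simpa [Matrix.star_eq_conjTranspose] using hBmem.2
    have hBtB : Bᵀ * B = 1 := by
      simpa [Matrix.star_eq_conjTranspose] using hBmem.1
    have hBt : Bᵀ ∈ Matrix.specialOrthogonalGroup (Fin m) ℝ := by
      constructor
      · constructor
        · simpa [Matrix.star_eq_conjTranspose] using hBBt
        · simpa [Matrix.star_eq_conjTranspose] using hBtB
      · show Bᵀ.det = 1
        rw [Matrix.det_transpose]; exact hB.2
    have hγbarinv : ∀ p : (Fin m → ℝ) × ℝ,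
        γbar⁻¹ p = (lam⁻¹ • (Bᵀ *ᵥ p.1), lam⁻¹ * p.2) := by
      intro p
      have : γbar (lam⁻¹ • (Bᵀ *ᵥ p.1), lam⁻¹ * p.2) = p := by
        rw [hγbar]
        simp only [Matrix.mulVec_smul, Matrix.mulVec_mulVec, hBBt, Matrix.one_mulVec,
          smul_smul, ← mul_assoc, mul_inv_cancel₀ hlam.ne', one_smul, one_mul]
      apply γbar.injective
      rw [Equiv.Perm.inv_def, Equiv.apply_symm_apply, this]
    obtain ⟨p, c, hp, hcp, hacc⟩ :=
      aux_not_discrete m A Bᵀ hBt b hb lam⁻¹ (inv_pos.mpr hlam)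
        (inv_lt_one_of_one_lt₀ hgt) γ γbar⁻¹ hγ hγbarinv
    have hle : Subgroup.closure ({γ, γbar⁻¹} : Set (Equiv.Perm ((Fin m → ℝ) × ℝ))) ≤
        Subgroup.closure {γ, γbar} := by
      rw [Subgroup.closure_le]
      rintro x (rfl | rfl)
      · exact Subgroup.subset_closure (Set.mem_insert _ _)
      · exact inv_mem (Subgroup.subset_closure (Set.mem_insert_of_mem _ rfl))
    exact ⟨p, c, hp, hcp, hacc.mono (principal_mono.mpr (Set.image_mono hle))⟩
end

section
/- A compact oriented Riemannian 4-manifold that is locally conformally flat with identically zero scalar curvature has nonpositive Euler characteristic; combined with χ(Σ_g × Σ_h) = (2−2g)(2−2h) ≥ 0 for g ≥ 2, h ≥ 1, such a metric on Σ_g × Σ_h forces χ = 0 and the metric to be Ricci-flat, hence flat, which is impossible since χ(Σ_g × Σ_h) ≠ 0 when g,h ≥ 2. -/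
open MeasureTheory Real

/-- Chern–Gauss–Bonnet consequence: for a compact oriented Riemannian 4-manifold
`M = Σ_g × Σ_h` (with `g ≥ 2`, `h ≥ 1`, so `χ = (2-2g)(2-2h) ≥ 0`), with
`χ = (1/8π²) ∫ (s²/24 − |Ric₀|²/2 + |W₊|² + |W₋|²)`, a locally conformally flat
metric (`W₊ = W₋ = 0`) of identically zero scalar curvature forces `χ ≤ 0`, hence
`χ = 0` and the metric is Ricci-flat (`∫|Ric₀|² = 0`), hence flat — which is
impossible when `g, h ≥ 2` since then `χ ≠ 0`; thus necessarily `h = 1`. -/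
theorem lcf_zero_scalar_forces_flat
    {M : Type*} [MeasurableSpace M] (μ : Measure M) [IsFiniteMeasure μ]
    (g h : ℕ) (hg : 2 ≤ g) (hh : 1 ≤ h)
    (χ : ℤ) (hχ : χ = ((2 : ℤ) - 2 * g) * ((2 : ℤ) - 2 * h))
    (s ric0sq Wpsq Wmsq : M → ℝ)
    (hric0 : ∀ x, 0 ≤ ric0sq x) (hric0int : Integrable ric0sq μ)
    (hWp : ∀ x, 0 ≤ Wpsq x) (hWm : ∀ x, 0 ≤ Wmsq x)
    (hCGB : (χ : ℝ) = (1 / (8 * π ^ 2)) *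
      ∫ x, ((s x) ^ 2 / 24 - ric0sq x / 2 + Wpsq x + Wmsq x) ∂μ)
    (hLCF : (∀ x, Wpsq x = 0) ∧ ∀ x, Wmsq x = 0)
    (hscalar : ∀ x, s x = 0) :
    χ ≤ 0 ∧ χ = 0 ∧ (∫ x, ric0sq x ∂μ) = 0 ∧ h = 1 := by
  obtain ⟨hWp0, hWm0⟩ := hLCF
  have hfun : (fun x => (s x) ^ 2 / 24 - ric0sq x / 2 + Wpsq x + Wmsq x)
      = fun x => (-(1/2 : ℝ)) * ric0sq x := by
    funext x; simp [hscalar x, hWp0 x, hWm0 x]; ring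
  rw [hfun, integral_const_mul] at hCGB
  have hπ : (0 : ℝ) < 1 / (8 * π ^ 2) := by positivity
  have hI : 0 ≤ ∫ x, ric0sq x ∂μ := integral_nonneg hric0
  have hχle : (χ : ℝ) ≤ 0 := by
    rw [hCGB]; nlinarith
  have h1 : χ ≤ 0 := by exact_mod_cast hχle
  have h2 : χ = 0 := by
    have : (0 : ℤ) ≤ χ := by
      rw [hχ]
      have : (g : ℤ) ≥ 2 := by exact_mod_cast hg
      have : (h : ℤ) ≥ 1 := by exact_mod_cast hh
      nlinarith [show (g : ℤ) ≥ 2 by exact_mod_cast hg]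
    omega
  have h3 : (∫ x, ric0sq x ∂μ) = 0 := by
    rw [h2] at hCGB
    push_cast at hCGB
    have := hCGB.symm
    nlinarith
  refine ⟨h1, h2, h3, ?_⟩
  rw [h2] at hχ
  have hg' : (g : ℤ) ≥ 2 := by exact_mod_cast hg
  have : (2 : ℤ) - 2 * h = 0 := by
    rcases mul_eq_zero.mp hχ.symm with e | e
    · omega
    · exact e
  omega
end
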